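/- Let F be a p-adic field with normalized ψ and χ of conductor m ≥ 2, k = ⌊m/2⌋, and let c_{χ,ψ} ∈ O*/(1+P^k) be the unique element with h_{ψ_{c_{χ,ψ}}} = χ⁻¹ on 1+P^{m-k}. Then for any integer l with χ^l still of conductor m, c_{χ^l, ψ_l} = c_{χ,ψ}, and for a ∈ O*, c_{χ, ψ_a} = a⁻¹ c_{χ,ψ}. -/

import Mathlib

/-- Let `F` be a p-adic field with normalized `ψ` and `χ` of conductor `m ≥ 2`,
`k = ⌊m/2⌋`, and let `c` be the element (unique mod `1+P^k`) with
`ψ(cϖ^{-m}(x-1)) = χ(x)⁻¹` on `1+P^{m-k}`. Then for any integer `l` with `χ^l`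
still of conductor `m`, one has `c_{χ^l, ψ_l} = c_{χ,ψ}` in `Oˣ/(1+P^k)`, and for a
unit `a` of `O`, `c_{χ, ψ_a} = a⁻¹ · c_{χ,ψ}` in `Oˣ/(1+P^k)`. -/
theorem stmt_15 {p : ℕ} [Fact p.Prime] {F : Type*} [Field F]
    [Algebra ℚ_[p] F] [FiniteDimensional ℚ_[p] F]
    (O : Subring F) (ϖ : F)
    (hϖO : ϖ ∈ O) (hϖ0 : ϖ ≠ 0) (hϖnu : ϖ⁻¹ ∉ O)
    (hϖgen : ∀ x : F, x ∈ O → x⁻¹ ∉ O → x * ϖ⁻¹ ∈ O)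
    (hval : ∀ x : F, x ≠ 0 → ∃ n : ℤ, x * (ϖ ^ n)⁻¹ ∈ O ∧ (x * (ϖ ^ n)⁻¹)⁻¹ ∈ O)
    (ψ : AddChar F ℂ)
    (hψO : ∀ x : F, x ∈ O → ψ x = 1)
    (hψnt : ∃ x : F, ϖ * x ∈ O ∧ ψ x ≠ 1)
    (m : ℕ) (hm : 2 ≤ m) (k : ℕ) (hk : k = m / 2)
    (χ : F →* ℂ)
    (hχ : ∀ x : F, (x - 1) * (ϖ ^ m)⁻¹ ∈ O → χ x = 1)
    (hχ' : ∃ x : F, (x - 1) * (ϖ ^ (m - 1))⁻¹ ∈ O ∧ χ x ≠ 1)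
    (c : F) (hcO : c ∈ O) (hcu : c⁻¹ ∈ O)
    (hc : ∀ x : F, (x - 1) * (ϖ ^ (m - k))⁻¹ ∈ O →
      ψ (c * (x - 1) * (ϖ ^ m)⁻¹) = (χ x)⁻¹) :
    (∀ l : ℤ,
      (∃ x : F, (x - 1) * (ϖ ^ (m - 1))⁻¹ ∈ O ∧ (χ x) ^ l ≠ 1) →
      ∀ c' : F, c' ∈ O → c'⁻¹ ∈ O →
        (∀ x : F, (x - 1) * (ϖ ^ (m - k))⁻¹ ∈ O →
          ψ ((l : F) * (c' * (x - 1) * (ϖ ^ m)⁻¹)) = ((χ x) ^ l)⁻¹) →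
        (c' * c⁻¹ - 1) * (ϖ ^ k)⁻¹ ∈ O) ∧
    (∀ a : F, a ∈ O → a⁻¹ ∈ O →
      ∀ c' : F, c' ∈ O → c'⁻¹ ∈ O →
        (∀ x : F, (x - 1) * (ϖ ^ (m - k))⁻¹ ∈ O →
          ψ (a * (c' * (x - 1) * (ϖ ^ m)⁻¹)) = (χ x)⁻¹) →
        (c' * (a⁻¹ * c)⁻¹ - 1) * (ϖ ^ k)⁻¹ ∈ O) := by
  have hψ0 : ψ 0 = 1 := ψ.map_zero_eq_one
  have hψadd : ∀ y z : F, ψ (y + z) = ψ y * ψ z := ψ.map_add_eq_mul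
  have hψmulneg : ∀ y : F, ψ y * ψ (-y) = 1 := fun y => by
    rw [← hψadd, add_neg_cancel, hψ0]
  have hψne : ∀ y : F, ψ y ≠ 0 := fun y h => by
    have := hψmulneg y; rw [h, zero_mul] at this; exact zero_ne_one this
  have hψneg : ∀ y : F, ψ (-y) = (ψ y)⁻¹ := fun y =>
    eq_inv_of_mul_eq_one_left (by rw [mul_comm]; exact hψmulneg y)
  have hψsub : ∀ y z : F, ψ (y - z) = ψ y * (ψ z)⁻¹ := fun y z => by
    rw [sub_eq_add_neg, hψadd, hψneg]
  -- ψ ((n : F) * y) = ψ y ^ n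
  have hz : ∀ (n : ℤ) (y : F), ψ ((n : F) * y) = ψ y ^ n := by
    intro n y
    induction n using Int.induction_on with
    | zero => simp [hψ0]
    | succ i ih =>
        rw [Int.cast_add, Int.cast_one, add_mul, one_mul, hψadd, ih,
          ← zpow_add_one₀ (hψne y)]
    | pred i ih =>
        rw [Int.cast_sub, Int.cast_one, sub_mul, one_mul, hψsub, ih,
          ← zpow_sub_one₀ (hψne y)]
  have hkm : k ≤ m := hk ▸ Nat.div_le_self m 2
  have hk1 : 1 ≤ k := by omega
  have hϖp0 : ∀ n : ℕ, (ϖ : F) ^ n ≠ 0 := fun n => pow_ne_zero n hϖ0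
  -- monotonicity of the filtration
  have hmono : ∀ (i j : ℕ), i ≤ j → ∀ y : F, y * (ϖ ^ j)⁻¹ ∈ O → y * (ϖ ^ i)⁻¹ ∈ O := by
    intro i j hij y hy
    have heq : y * (ϖ ^ i)⁻¹ = y * (ϖ ^ j)⁻¹ * ϖ ^ (j - i) := by
      rw [show j = i + (j - i) by omega, pow_add]
      field_simp
      ring_nf
      rw [Nat.add_sub_cancel]
    rw [heq]; exact O.mul_mem hy (O.pow_mem hϖO _)
  -- Lemma A: if ψ is trivial on s • O then s ∈ O
  have lemA : ∀ s : F, (∀ t : F, t ∈ O → ψ (s * t) = 1) → s ∈ O := by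
    intro s hs
    by_contra hsO
    have hs0 : s ≠ 0 := fun h => hsO (h ▸ O.zero_mem)
    obtain ⟨n, hu, hui⟩ := hval s hs0
    have hu0 : s * (ϖ ^ n)⁻¹ ≠ 0 :=
      mul_ne_zero hs0 (inv_ne_zero (zpow_ne_zero n hϖ0))
    have hn : n < 0 := by
      by_contra hn
      push_neg at hn
      apply hsO
      have : s = s * (ϖ ^ n)⁻¹ * ϖ ^ n.toNat := by
        rw [← zpow_natCast ϖ n.toNat, show ((n.toNat : ℤ)) = n by omega,
          inv_mul_cancel_right₀ (zpow_ne_zero n hϖ0)]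
      rw [this]; exact O.mul_mem hu (O.pow_mem hϖO _)
    obtain ⟨x, hx1, hx2⟩ := hψnt
    apply hx2
    have hxeq : x = s * ((s * (ϖ ^ n)⁻¹)⁻¹ * ϖ ^ (-n - 1).toNat * (ϖ * x)) := by
      rw [← zpow_natCast ϖ (-n - 1).toNat, show (((-n - 1).toNat : ℤ)) = -n - 1 by omega]
      rw [mul_inv, inv_inv]
      field_simp
      rw [mul_assoc x, ← zpow_add₀ hϖ0 n (-n - 1), show n + (-n - 1) = -1 by ring, zpow_neg, zpow_one]
      field_simp
    rw [hxeq]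
    exact hs _ (O.mul_mem (O.mul_mem hui (O.pow_mem hϖO _)) hx1)
  -- Lemma B: if ψ (b (x-1) ϖ^{-m}) = 1 on 1 + P^{m-k} then b ∈ P^k
  have lemB : ∀ b : F,
      (∀ x : F, (x - 1) * (ϖ ^ (m - k))⁻¹ ∈ O → ψ (b * (x - 1) * (ϖ ^ m)⁻¹) = 1) →
      b * (ϖ ^ k)⁻¹ ∈ O := by
    intro b hb
    apply lemA
    intro t ht
    have h1 : ((1 + ϖ ^ (m - k) * t) - 1) * (ϖ ^ (m - k))⁻¹ ∈ O := by
      have : ((1 + ϖ ^ (m - k) * t) - 1) * (ϖ ^ (m - k))⁻¹ = t := by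
        field_simp
        ring
      rw [this]; exact ht
    have h2 := hb _ h1
    have heq : b * ((1 + ϖ ^ (m - k) * t) - 1) * (ϖ ^ m)⁻¹ = b * (ϖ ^ k)⁻¹ * t := by
      rw [show m = (m - k) + k by omega, pow_add]
      field_simp
      ring_nf
      rw [Nat.add_sub_cancel]
    rw [heq] at h2
    exact h2
  -- χ is nonzero on 1 + P^{m-k}
  have hχne : ∀ x : F, (x - 1) * (ϖ ^ (m - k))⁻¹ ∈ O → χ x ≠ 0 := by
    intro x hx h0
    have := hc x hx
    rw [h0, inv_zero] at this
    exact hψne _ this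
  obtain ⟨x₀, hx₀, hx₀ne⟩ := hχ'
  have hx₀' : (x₀ - 1) * (ϖ ^ (m - k))⁻¹ ∈ O := hmono (m - k) (m - 1) (by omega) _ hx₀
  have hc0 : c ≠ 0 := by
    intro h
    have := hc x₀ hx₀'
    rw [h, zero_mul, zero_mul, hψ0] at this
    exact hx₀ne (by rw [← inv_inv (χ x₀), ← this, inv_one])
  constructor
  · -- part 1
    intro l hl c' hc'O hc'u hc'
    -- key: l (c' - c) ∈ P^k
    have key : ((l : F) * (c' - c)) * (ϖ ^ k)⁻¹ ∈ O := by
      apply lemB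
      intro x hx
      have h1 := hc' x hx
      have h2 := hc x hx
      have heq : (l : F) * (c' - c) * (x - 1) * (ϖ ^ m)⁻¹ =
          (l : F) * (c' * (x - 1) * (ϖ ^ m)⁻¹) - (l : F) * (c * (x - 1) * (ϖ ^ m)⁻¹) := by
        ring
      rw [heq, hψsub, h1, hz l (c * (x - 1) * (ϖ ^ m)⁻¹), h2, inv_zpow, inv_inv]
      exact inv_mul_cancel₀ (zpow_ne_zero _ (hχne x hx))
    -- l is a unit in O
    have hlF : (l : F) ≠ 0 ∧ ((l : F))⁻¹ ∈ O := by
      have hnd : ¬((l : F) = 0 ∨ (l : F) * ϖ⁻¹ ∈ O) := by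
        intro hcase
        obtain ⟨x, hx, hxne⟩ := hl
        apply hxne
        have hx' : (x - 1) * (ϖ ^ (m - k))⁻¹ ∈ O := hmono (m - k) (m - 1) (by omega) _ hx
        have hχx := hχne x hx'
        have hval1 : (χ x) ^ l = ψ (((-l : ℤ) : F) * (c * (x - 1) * (ϖ ^ m)⁻¹)) := by
          rw [hz (-l) _, hc x hx', inv_zpow', neg_neg]
        rw [hval1]
        rcases hcase with h0 | hP
        · rw [show (((-l : ℤ) : F)) = -(l : F) from by push_cast; ring, h0, neg_zero,
            zero_mul, hψ0]
        · apply hψO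
          have heq : ((-l : ℤ) : F) * (c * (x - 1) * (ϖ ^ m)⁻¹) =
              -(((l : F) * ϖ⁻¹) * (((x - 1) * (ϖ ^ (m - 1))⁻¹) * c)) := by
            have hsplit : ϖ ^ m = ϖ * ϖ ^ (m - 1) := by
              rw [← pow_succ']; congr 1; omega
            rw [hsplit, mul_inv, show (((-l : ℤ) : F)) = -(l : F) from by push_cast; ring]
            ring
          rw [heq]
          exact O.neg_mem (O.mul_mem hP (O.mul_mem hx hcO))
      push_neg at hnd
      refine ⟨hnd.1, ?_⟩
      by_contra hinv
      exact hnd.2 (hϖgen _ (intCast_mem O l) hinv)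
    obtain ⟨hl0, hlinv⟩ := hlF
    have heq : (c' * c⁻¹ - 1) * (ϖ ^ k)⁻¹ =
        c⁻¹ * ((l : F)⁻¹ * (((l : F) * (c' - c)) * (ϖ ^ k)⁻¹)) := by
      field_simp
    rw [heq]
    exact O.mul_mem hcu (O.mul_mem hlinv key)
  · -- part 2
    intro a haO hau c' hc'O hc'u hc'
    have ha0 : a ≠ 0 := by
      intro h
      have := hc' x₀ hx₀'
      rw [h, zero_mul, hψ0] at this
      exact hx₀ne (by rw [← inv_inv (χ x₀), ← this, inv_one])
    have key : ((a * c' - c)) * (ϖ ^ k)⁻¹ ∈ O := by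
      apply lemB
      intro x hx
      have h1 := hc' x hx
      have h2 := hc x hx
      have heq : (a * c' - c) * (x - 1) * (ϖ ^ m)⁻¹ =
          a * (c' * (x - 1) * (ϖ ^ m)⁻¹) - c * (x - 1) * (ϖ ^ m)⁻¹ := by
        ring
      rw [heq, hψsub, h1, h2, inv_inv]
      exact inv_mul_cancel₀ (hχne x hx)
    have heq : (c' * (a⁻¹ * c)⁻¹ - 1) * (ϖ ^ k)⁻¹ =
        c⁻¹ * ((a * c' - c) * (ϖ ^ k)⁻¹) := by
      field_simp
    rw [heq]
    exact O.mul_mem hcu key
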